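/- Let k ≥ 2 be a fixed integer and let p = p(n) be a sequence with n·p / log n → ∞ and n·p ≤ n^{1/(k−1)} for all large n. Let A = A(n) and B = B(n) be disjoint vertex sets with 1 ≤ |A| ≤ (n·p)^{k−2} and |B| = (1 + o(1))·n, and consider the random bipartite graph on A ∪ B in which each pair in A × B is an edge independently with probability p. Then for all sufficiently large n, with probability at least 1 − 1/n³ there is a d-matching from A to B that saturates A, where d = ⌊n·p/4⌋. -/

import Mathlib

open Filter

noncomputable section
open scoped Classical

/-- The probability that the random bipartite graph with parts `Fin a` and `Fin b`, in which
each pair is an edge independently with probability `p`, satisfies the property `P`. -/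
def bipProb (a b : ℕ) (p : ℝ) (P : (Fin a → Fin b → Prop) → Prop) : ℝ :=
  ∑ f : Fin a → Fin b → Bool,
    if P (fun x y => f x y = true) then
      p ^ (Finset.univ.filter (fun q : Fin a × Fin b => f q.1 q.2 = true)).card *
        (1 - p) ^ (Finset.univ.filter (fun q : Fin a × Fin b => f q.1 q.2 = false)).card
    else 0

/-- A `d`-matching from `A` to `B` saturating `A`: pairwise disjoint stars `K_{1,d}`, one
centered at each vertex of `A`, with all leaves in `B` and all edges in the graph. -/
def HasDMatching {a b : ℕ} (E : Fin a → Fin b → Prop) (d : ℕ) : Prop :=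
  ∃ L : Fin a → Finset (Fin b),
    (∀ x, (L x).card = d ∧ ∀ y ∈ L x, E x y) ∧
    ∀ x x', x ≠ x' → Disjoint (L x) (L x')

namespace BipAux

open Finset

/-- weight of a single Bool value -/
def w (p : ℝ) (v : Bool) : ℝ := if v = true then p else 1 - p

lemma w_nonneg {p : ℝ} (h0 : 0 ≤ p) (h1 : p ≤ 1) (v : Bool) : 0 ≤ w p v := by
  cases v <;> simp [w] <;> linarith

lemma ite0_congr {P Q : Prop} {i1 : Decidable P} {i2 : Decidable Q} (h : P ↔ Q) (x : ℝ) :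
    (@ite ℝ P i1 x 0) = (@ite ℝ Q i2 x 0) := if_congr h rfl rfl

lemma sum_ite_pi {ι γ : Type*} [Fintype ι] [Fintype γ] [DecidableEq ι]
    (W : ι → γ → ℝ) (R : ι → γ → Prop) :
    ∑ g : ι → γ, (if (∀ i, R i (g i)) then ∏ i, W i (g i) else 0)
      = ∏ i, ∑ c : γ, (if R i c then W i c else 0) := by
  rw [Fintype.prod_sum]
  refine Fintype.sum_congr _ _ fun g => ?_
  by_cases h : ∀ i, R i (g i)
  · rw [if_pos h]
    exact Finset.prod_congr rfl fun i _ => by rw [if_pos (h i)]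
  · rw [if_neg h]
    push_neg at h
    obtain ⟨i0, hi0⟩ := h
    exact (Finset.prod_eq_zero (Finset.mem_univ i0) (by rw [if_neg hi0])).symm

variable {a b : ℕ} {p : ℝ}

lemma bipProb_eq (P : (Fin a → Fin b → Prop) → Prop) :
    bipProb a b p P
      = ∑ f : Fin a → Fin b → Bool,
          (if P (fun x y => f x y = true) then ∏ q : Fin a × Fin b, w p (f q.1 q.2) else 0) := by
  refine Finset.sum_congr rfl fun f _ => ?_
  by_cases h : P (fun x y => f x y = true)
  · rw [if_pos h, if_pos h]
    have h1 : ∏ q ∈ Finset.univ.filter (fun q : Fin a × Fin b => f q.1 q.2 = true),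
        w p (f q.1 q.2) = p ^ (Finset.univ.filter (fun q : Fin a × Fin b => f q.1 q.2 = true)).card := by
      rw [Finset.prod_congr rfl (fun q hq => ?_), Finset.prod_const]
      rw [Finset.mem_filter] at hq
      simp [w, hq.2]
    have hset : Finset.univ.filter (fun q : Fin a × Fin b => ¬ f q.1 q.2 = true)
        = Finset.univ.filter (fun q : Fin a × Fin b => f q.1 q.2 = false) := by
      apply Finset.filter_congr
      intro q _
      simp
    have h2 : ∏ q ∈ Finset.univ.filter (fun q : Fin a × Fin b => ¬ f q.1 q.2 = true),
        w p (f q.1 q.2)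
        = (1 - p) ^ (Finset.univ.filter (fun q : Fin a × Fin b => f q.1 q.2 = false)).card := by
      rw [hset, Finset.prod_congr rfl (fun q hq => ?_), Finset.prod_const]
      rw [Finset.mem_filter] at hq
      simp [w, hq.2]
    rw [← Finset.prod_filter_mul_prod_filter_not Finset.univ
        (fun q : Fin a × Fin b => f q.1 q.2 = true) (fun q => w p (f q.1 q.2)), h1, h2]
  · rw [if_neg h, if_neg h]

lemma bipProb_congr {P Q : (Fin a → Fin b → Prop) → Prop}
    (h : ∀ E, P E ↔ Q E) : bipProb a b p P = bipProb a b p Q := by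
  unfold bipProb
  exact Finset.sum_congr rfl fun f _ => if_congr (h _) rfl rfl

def colSum (a : ℕ) (p : ℝ) (R : (Fin a → Prop) → Prop) : ℝ :=
  ∑ c : Fin a → Bool, if R (fun x => c x = true) then ∏ x, w p (c x) else 0

lemma colSum_congr {R R' : (Fin a → Prop) → Prop} (h : ∀ c, R c ↔ R' c) :
    colSum a p R = colSum a p R' :=
  Finset.sum_congr rfl fun c _ => if_congr (h _) rfl rfl

lemma colSum_nonneg (h0 : 0 ≤ p) (h1 : p ≤ 1) (R : (Fin a → Prop) → Prop) :
    0 ≤ colSum a p R :=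
  Finset.sum_nonneg fun c _ => by
    by_cases h : R (fun x => c x = true)
    · rw [if_pos h]; exact Finset.prod_nonneg fun x _ => w_nonneg h0 h1 _
    · rw [if_neg h]

lemma colSum_pointwise (R : Fin a → Prop → Prop) :
    colSum a p (fun c => ∀ x, R x (c x)) = ∏ x, ∑ v : Bool, if R x (v = true) then w p v else 0 :=
  (Finset.sum_congr rfl fun c _ => ite0_congr Iff.rfl _).trans
    (sum_ite_pi (fun (_ : Fin a) (v : Bool) => w p v) (fun x v => R x (v = true)))

def transposeEquiv (α β γ : Type*) : (α → β → γ) ≃ (β → α → γ) :=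
  ⟨Function.swap, Function.swap, fun _ => rfl, fun _ => rfl⟩

lemma bipProb_cols (Q : Fin b → (Fin a → Prop) → Prop) :
    bipProb a b p (fun E => ∀ y, Q y (fun x => E x y))
      = ∏ y, colSum a p (Q y) := by
  have h1 : ∀ f : Fin a → Fin b → Bool,
      (∏ q : Fin a × Fin b, w p (f q.1 q.2)) = ∏ y, ∏ x, w p (f x y) := by
    intro f
    rw [Fintype.prod_prod_type]
    exact Finset.prod_comm
  have key := sum_ite_pi (ι := Fin b) (γ := Fin a → Bool)
     (fun (_ : Fin b) (c : Fin a → Bool) => ∏ x, w p (c x))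
     (fun y c => Q y (fun x => c x = true))
  have key2 : (∏ y, (∑ c : Fin a → Bool,
        if Q y (fun x => c x = true) then ∏ x, w p (c x) else 0)) = ∏ y, colSum a p (Q y) :=
    Finset.prod_congr rfl fun y _ => Finset.sum_congr rfl fun c _ => ite0_congr Iff.rfl _
  rw [bipProb_eq, ← key2, ← key]
  refine Fintype.sum_equiv (transposeEquiv (Fin a) (Fin b) Bool) _ _ (fun f => ?_)
  rw [h1 f]
  exact ite0_congr Iff.rfl _

lemma colSum_true : colSum a p (fun _ => True) = 1 := by
  have h1 : colSum a p (fun _ => True) = colSum a p (fun c => ∀ _ : Fin a, True) :=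
    colSum_congr (fun c => by simp)
  rw [h1, colSum_pointwise (fun _ _ => True)]
  have h2 : ∀ x : Fin a, (∑ v : Bool, if True then w p v else 0) = 1 := by
    intro x
    rw [Fintype.sum_bool]
    simp [w]
  refine Eq.trans (Finset.prod_congr rfl fun x _ =>
    ((Finset.sum_congr rfl fun v _ => ite0_congr Iff.rfl _).trans (h2 x))) ?_
  exact Finset.prod_const_one

lemma colSum_compl (R : (Fin a → Prop) → Prop) :
    colSum a p (fun c => ¬ R c) = 1 - colSum a p R := by
  have h : colSum a p R + colSum a p (fun c => ¬ R c) = 1 := by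
    rw [← colSum_true (a := a) (p := p)]
    unfold colSum
    rw [← Finset.sum_add_distrib]
    refine Finset.sum_congr rfl fun c _ => ?_
    by_cases h : R (fun x => c x = true)
    · rw [if_pos h, if_neg (not_not_intro h), if_pos trivial, add_zero]
    · rw [if_neg h, if_pos h, if_pos trivial, zero_add]
  linarith

lemma colSum_allFalse (S : Finset (Fin a)) :
    colSum a p (fun c => ∀ x ∈ S, ¬ c x) = (1 - p) ^ S.card := by
  rw [colSum_pointwise (fun x v => x ∈ S → ¬ v)]
  have hfac : ∀ x : Fin a,
      (∑ v : Bool, if (x ∈ S → ¬ (v = true)) then w p v else 0)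
        = if x ∈ S then 1 - p else 1 := by
    intro x
    by_cases hx : x ∈ S
    · rw [Fintype.sum_bool, if_pos hx]
      simp [hx, w]
    · rw [Fintype.sum_bool, if_neg hx]
      simp [hx, w]
  refine Eq.trans (Finset.prod_congr rfl fun x _ =>
    ((Finset.sum_congr rfl fun v _ => ite0_congr Iff.rfl _).trans (hfac x))) ?_
  exact (Fintype.prod_ite_mem S (fun _ => 1 - p)).trans (Finset.prod_const _)

lemma colSum_existsMem (S : Finset (Fin a)) :
    colSum a p (fun c => ∃ x ∈ S, c x) = 1 - (1 - p) ^ S.card := by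
  calc colSum a p (fun c => ∃ x ∈ S, c x)
      = colSum a p (fun c => ¬ ∀ x ∈ S, ¬ c x) := colSum_congr (fun c => by simp)
    _ = 1 - colSum a p (fun c => ∀ x ∈ S, ¬ c x) := colSum_compl _
    _ = 1 - (1 - p) ^ S.card := by rw [colSum_allFalse]

lemma bipProb_nonneg (h0 : 0 ≤ p) (h1 : p ≤ 1) (P : (Fin a → Fin b → Prop) → Prop) :
    0 ≤ bipProb a b p P := by
  rw [bipProb_eq]
  refine Finset.sum_nonneg fun f _ => ?_
  by_cases h : P (fun x y => f x y = true)
  · rw [if_pos h]; exact Finset.prod_nonneg fun q _ => w_nonneg h0 h1 _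
  · rw [if_neg h]

lemma bipProb_true : bipProb a b p (fun _ => True) = 1 := by
  calc bipProb a b p (fun _ => True)
      = bipProb a b p (fun E => ∀ y : Fin b, (fun (_ : Fin b) (_ : Fin a → Prop) => True) y
          (fun x => E x y)) := bipProb_congr (fun E => by simp)
    _ = ∏ y : Fin b, colSum a p (fun _ => True) :=
        bipProb_cols (Q := fun (_ : Fin b) (_ : Fin a → Prop) => True)
    _ = 1 := by rw [colSum_true, Finset.prod_const_one]

lemma bipProb_compl (P : (Fin a → Fin b → Prop) → Prop) :
    bipProb a b p (fun E => ¬ P E) = 1 - bipProb a b p P := by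
  have h : bipProb a b p P + bipProb a b p (fun E => ¬ P E) = 1 := by
    rw [← bipProb_true (a := a) (b := b) (p := p)]
    unfold bipProb
    rw [← Finset.sum_add_distrib]
    refine Finset.sum_congr rfl fun f _ => ?_
    by_cases h : P (fun x y => f x y = true)
    · rw [if_pos h, if_neg (not_not_intro h), if_pos trivial, add_zero]
    · rw [if_neg h, if_pos h, if_pos trivial, zero_add]
  linarith

lemma bipProb_mono (h0 : 0 ≤ p) (h1 : p ≤ 1) {P Q : (Fin a → Fin b → Prop) → Prop}
    (h : ∀ E, P E → Q E) : bipProb a b p P ≤ bipProb a b p Q := by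
  rw [bipProb_eq, bipProb_eq]
  refine Finset.sum_le_sum fun f _ => ?_
  by_cases hP : P (fun x y => f x y = true)
  · rw [if_pos hP, if_pos (h _ hP)]
  · rw [if_neg hP]
    by_cases hQ : Q (fun x y => f x y = true)
    · rw [if_pos hQ]; exact Finset.prod_nonneg fun q _ => w_nonneg h0 h1 _
    · rw [if_neg hQ]

lemma bipProb_union (h0 : 0 ≤ p) (h1 : p ≤ 1) {ι : Type*} (I : Finset ι)
    (P : ι → (Fin a → Fin b → Prop) → Prop) :
    bipProb a b p (fun E => ∃ i ∈ I, P i E) ≤ ∑ i ∈ I, bipProb a b p (P i) := by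
  rw [bipProb_eq]
  have key : ∀ f : Fin a → Fin b → Bool,
      (if (∃ i ∈ I, P i (fun x y => f x y = true)) then ∏ q : Fin a × Fin b, w p (f q.1 q.2) else 0)
        ≤ ∑ i ∈ I, (if P i (fun x y => f x y = true)
            then ∏ q : Fin a × Fin b, w p (f q.1 q.2) else 0) := by
    intro f
    have hnn : ∀ i ∈ I, (0:ℝ) ≤ (if P i (fun x y => f x y = true)
        then ∏ q : Fin a × Fin b, w p (f q.1 q.2) else 0) := by
      intro i _
      by_cases h : P i (fun x y => f x y = true)
      · rw [if_pos h]; exact Finset.prod_nonneg fun q _ => w_nonneg h0 h1 _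
      · rw [if_neg h]
    by_cases hex : ∃ i ∈ I, P i (fun x y => f x y = true)
    · obtain ⟨i0, hi0, hPi0⟩ := hex
      rw [if_pos ⟨i0, hi0, hPi0⟩]
      calc (∏ q : Fin a × Fin b, w p (f q.1 q.2))
          = (if P i0 (fun x y => f x y = true)
              then ∏ q : Fin a × Fin b, w p (f q.1 q.2) else 0) := by rw [if_pos hPi0]
        _ ≤ _ := Finset.single_le_sum hnn hi0
    · rw [if_neg hex]
      exact Finset.sum_nonneg hnn
  refine le_trans (Finset.sum_le_sum fun f _ =>
    le_trans (le_of_eq (ite0_congr Iff.rfl _)) (key f)) (le_of_eq ?_)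
  rw [Finset.sum_comm]
  exact Finset.sum_congr rfl fun i _ => (bipProb_eq (P i)).symm

lemma prod_ite_mem_card {β : Type*} [Fintype β] [DecidableEq β] (T : Finset β) (A B : ℝ) :
    (∏ y, if y ∈ T then A else B) = A ^ T.card * B ^ (Fintype.card β - T.card) := by
  classical
  rw [← Finset.prod_filter_mul_prod_filter_not Finset.univ (· ∈ T)
    (fun y => if y ∈ T then A else B)]
  have hc : (Finset.univ.filter (fun y => ¬ y ∈ T)).card = Fintype.card β - T.card := by
    have h2 := Finset.card_filter_add_card_filter_not
      (s := (Finset.univ : Finset β)) (p := (· ∈ T))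
    have h3 : (Finset.univ.filter (· ∈ T)) = T := Finset.filter_univ_mem T
    rw [h3] at h2
    have h4 : T.card + (Finset.univ.filter (fun y => ¬ y ∈ T)).card = Fintype.card β := by
      rw [← Finset.card_univ]
      exact h2
    omega
  congr 1
  · calc ∏ y ∈ Finset.univ.filter (· ∈ T), (if y ∈ T then A else B)
        = ∏ _y ∈ Finset.univ.filter (· ∈ T), A :=
          Finset.prod_congr rfl (fun y hy => if_pos (Finset.mem_filter.1 hy).2)
      _ = A ^ T.card := by rw [Finset.prod_const, Finset.filter_univ_mem]
  · calc ∏ y ∈ Finset.univ.filter (fun y => ¬ y ∈ T), (if y ∈ T then A else B)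
        = ∏ _y ∈ Finset.univ.filter (fun y => ¬ y ∈ T), B :=
          Finset.prod_congr rfl (fun y hy => if_neg (Finset.mem_filter.1 hy).2)
      _ = B ^ (Fintype.card β - T.card) := by rw [Finset.prod_const, hc]

lemma bipProb_N_eq (S : Finset (Fin a)) (T : Finset (Fin b)) :
    bipProb a b p (fun E => Finset.univ.filter (fun y => ∃ x ∈ S, E x y) = T)
      = (1 - (1 - p) ^ S.card) ^ T.card * ((1 - p) ^ S.card) ^ (b - T.card) := by
  calc bipProb a b p (fun E => Finset.univ.filter (fun y => ∃ x ∈ S, E x y) = T)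
      = bipProb a b p (fun E => ∀ y, (fun (y : Fin b) (c : Fin a → Prop) =>
          ((∃ x ∈ S, c x) ↔ y ∈ T)) y (fun x => E x y)) := by
        refine bipProb_congr (fun E => ?_)
        rw [Finset.ext_iff]
        constructor
        · intro h y
          have := h y
          simpa using this
        · intro h y
          simpa using h y
    _ = ∏ y, colSum a p (fun c => ((∃ x ∈ S, c x) ↔ y ∈ T)) :=
        bipProb_cols (Q := fun (y : Fin b) (c : Fin a → Prop) => ((∃ x ∈ S, c x) ↔ y ∈ T))
    _ = ∏ y : Fin b, (if y ∈ T then 1 - (1 - p) ^ S.card else (1 - p) ^ S.card) := by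
        refine Finset.prod_congr rfl fun y _ => ?_
        by_cases hy : y ∈ T
        · rw [if_pos hy]
          rw [colSum_congr (R' := fun c => ∃ x ∈ S, c x)
            (fun c => by simp [hy])]
          exact colSum_existsMem S
        · rw [if_neg hy]
          rw [colSum_congr (R' := fun c => ∀ x ∈ S, ¬ c x)
            (fun c => by simp [hy])]
          exact colSum_allFalse S
    _ = (1 - (1 - p) ^ S.card) ^ T.card * ((1 - p) ^ S.card) ^ (b - T.card) := by
        exact (prod_ite_mem_card T _ _).trans (by rw [Fintype.card_fin])

def Nb {a b : ℕ} (S : Finset (Fin a)) (E : Fin a → Fin b → Prop) : Finset (Fin b) :=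
  Finset.univ.filter (fun y => ∃ x ∈ S, E x y)

lemma bipProb_Nb_eq (S : Finset (Fin a)) (T : Finset (Fin b)) :
    bipProb a b p (fun E => Nb S E = T)
      = (1 - (1 - p) ^ S.card) ^ T.card * ((1 - p) ^ S.card) ^ (b - T.card) := by
  rw [← bipProb_N_eq S T]
  exact bipProb_congr (fun E => Iff.rfl)

lemma bipProb_N_pred (S : Finset (Fin a)) (pred : Finset (Fin b) → Prop) :
    bipProb a b p (fun E => pred (Nb S E))
      = ∑ T : Finset (Fin b),
          if pred T then
            (1 - (1 - p) ^ S.card) ^ T.card * ((1 - p) ^ S.card) ^ (b - T.card)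
          else 0 := by
  rw [bipProb_eq]
  calc ∑ f : Fin a → Fin b → Bool,
        (if pred (Nb S (fun x y => f x y = true))
          then ∏ q : Fin a × Fin b, w p (f q.1 q.2) else 0)
      = ∑ f : Fin a → Fin b → Bool, ∑ T : Finset (Fin b),
          (if Nb S (fun x y => f x y = true) = T
            then (if pred T then ∏ q : Fin a × Fin b, w p (f q.1 q.2) else 0) else 0) := by
        refine Finset.sum_congr rfl fun f _ => ?_
        have h := Finset.sum_ite_eq Finset.univ (Nb S (fun x y => f x y = true))
          (fun T => if pred T then ∏ q : Fin a × Fin b, w p (f q.1 q.2) else 0)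
        rw [if_pos (Finset.mem_univ _)] at h
        exact h.symm
    _ = ∑ T : Finset (Fin b), ∑ f : Fin a → Fin b → Bool,
          (if Nb S (fun x y => f x y = true) = T
            then (if pred T then ∏ q : Fin a × Fin b, w p (f q.1 q.2) else 0) else 0) :=
        Finset.sum_comm
    _ = ∑ T : Finset (Fin b),
          if pred T then
            (1 - (1 - p) ^ S.card) ^ T.card * ((1 - p) ^ S.card) ^ (b - T.card)
          else 0 := by
        refine Finset.sum_congr rfl fun T _ => ?_
        by_cases hp : pred T
        · simp only [if_pos hp]
          rw [← bipProb_Nb_eq S T, bipProb_eq]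
          exact Finset.sum_congr rfl fun f _ => ite0_congr Iff.rfl _
        · simp only [if_neg hp]
          exact (Finset.sum_congr rfl fun f _ => ite_self (0:ℝ)).trans Finset.sum_const_zero

lemma bipProb_card_lt (S : Finset (Fin a)) (t : ℕ) (htb : t ≤ b) :
    bipProb a b p (fun E => (Nb S E).card < t)
      = ∑ j ∈ Finset.range t, (b.choose j : ℝ) *
          ((1 - (1 - p) ^ S.card) ^ j * ((1 - p) ^ S.card) ^ (b - j)) := by
  rw [bipProb_N_pred S (fun T => T.card < t)]
  have main : (∑ T : Finset (Fin b),
      if T.card < t then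
        (1 - (1 - p) ^ S.card) ^ T.card * ((1 - p) ^ S.card) ^ (b - T.card) else 0)
      = ∑ j ∈ Finset.range t, (b.choose j : ℝ) *
          ((1 - (1 - p) ^ S.card) ^ j * ((1 - p) ^ S.card) ^ (b - j)) := by
    calc ∑ T : Finset (Fin b),
          (if T.card < t then
            (1 - (1 - p) ^ S.card) ^ T.card * ((1 - p) ^ S.card) ^ (b - T.card) else 0)
        = ∑ T ∈ (Finset.univ : Finset (Fin b)).powerset,
            (fun m => if m < t then
              (1 - (1 - p) ^ S.card) ^ m * ((1 - p) ^ S.card) ^ (b - m) else 0) T.card := by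
          rw [Finset.powerset_univ]
      _ = ∑ j ∈ Finset.range ((Finset.univ : Finset (Fin b)).card + 1),
            ((Finset.univ : Finset (Fin b)).card.choose j) •
              (fun m => if m < t then
                (1 - (1 - p) ^ S.card) ^ m * ((1 - p) ^ S.card) ^ (b - m) else 0) j :=
          Finset.sum_powerset_apply_card
            (fun m => if m < t then
              (1 - (1 - p) ^ S.card) ^ m * ((1 - p) ^ S.card) ^ (b - m) else 0)
      _ = ∑ j ∈ Finset.range (b + 1), (b.choose j) •
            (if j < t then (1 - (1 - p) ^ S.card) ^ j * ((1 - p) ^ S.card) ^ (b - j) else 0) := by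
          rw [Finset.card_univ, Fintype.card_fin]
      _ = ∑ j ∈ Finset.range t, (b.choose j : ℝ) *
            ((1 - (1 - p) ^ S.card) ^ j * ((1 - p) ^ S.card) ^ (b - j)) := by
          rw [← Finset.sum_subset (Finset.range_subset_range.2 (by omega) :
            Finset.range t ⊆ Finset.range (b + 1))]
          · refine Finset.sum_congr rfl fun j hj => ?_
            rw [Finset.mem_range] at hj
            rw [if_pos hj, nsmul_eq_mul]
          · intro j _ hj
            rw [Finset.mem_range, not_lt] at hj
            rw [if_neg (by omega), smul_zero]
  exact Eq.trans (Finset.sum_congr rfl fun T _ => ite0_congr Iff.rfl _) main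

lemma hall_dMatching {d : ℕ} (E : Fin a → Fin b → Prop)
    (h : ∀ S : Finset (Fin a), d * S.card ≤ (Nb S E).card) : HasDMatching E d := by
  classical
  have key : ∀ s : Finset (Fin a × Fin d),
      s.card ≤ (s.biUnion (fun z => Finset.univ.filter (fun y => E z.1 y))).card := by
    intro s
    have h1 : s ⊆ (s.image Prod.fst) ×ˢ (Finset.univ : Finset (Fin d)) := by
      intro z hz
      rw [Finset.mem_product]
      exact ⟨Finset.mem_image_of_mem _ hz, Finset.mem_univ _⟩
    have h2 : s.card ≤ (s.image Prod.fst).card * d := by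
      calc s.card ≤ ((s.image Prod.fst) ×ˢ (Finset.univ : Finset (Fin d))).card :=
            Finset.card_le_card h1
        _ = (s.image Prod.fst).card * d := by
            rw [Finset.card_product, Finset.card_univ, Fintype.card_fin]
    have h3 : (Nb (s.image Prod.fst) E)
        ⊆ s.biUnion (fun z => Finset.univ.filter (fun y => E z.1 y)) := by
      intro y hy
      obtain ⟨-, x, hxS, hxy⟩ := Finset.mem_filter.1 hy
      obtain ⟨z, hz, hz2⟩ := Finset.mem_image.1 hxS
      exact Finset.mem_biUnion.2 ⟨z, hz, Finset.mem_filter.2 ⟨Finset.mem_univ _, hz2 ▸ hxy⟩⟩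
    calc s.card ≤ (s.image Prod.fst).card * d := h2
      _ = d * (s.image Prod.fst).card := mul_comm _ _
      _ ≤ (Nb (s.image Prod.fst) E).card := h _
      _ ≤ _ := Finset.card_le_card h3
  obtain ⟨F, hinj, hmem⟩ := (Finset.all_card_le_biUnion_card_iff_exists_injective _).1 key
  refine ⟨fun x => Finset.univ.image (fun i : Fin d => F (x, i)), fun x => ⟨?_, ?_⟩, ?_⟩
  · rw [Finset.card_image_of_injective _ (fun i j hij => ?_), Finset.card_univ, Fintype.card_fin]
    exact (Prod.ext_iff.1 (hinj hij)).2
  · intro y hy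
    obtain ⟨i, -, rfl⟩ := Finset.mem_image.1 hy
    exact (Finset.mem_filter.1 (hmem (x, i))).2
  · intro x x' hxx
    rw [Finset.disjoint_left]
    intro y hy hy'
    obtain ⟨i, -, rfl⟩ := Finset.mem_image.1 hy
    obtain ⟨j, -, hj⟩ := Finset.mem_image.1 hy'
    have hx : (x', j) = (x, i) := hinj hj
    exact hxx (show x = x' from ((Prod.ext_iff.1 hx).1).symm)

lemma exp_neg_le_one_sub {x : ℝ} (h0 : 0 ≤ x) (h1 : x ≤ 1) :
    Real.exp (-x) ≤ 1 - (1 - Real.exp (-1)) * x := by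
  have h := convexOn_exp.2 (Set.mem_univ (-1 : ℝ)) (Set.mem_univ (0 : ℝ)) h0
    (by linarith : (0:ℝ) ≤ 1 - x) (by ring)
  simp only [smul_eq_mul, mul_zero, add_zero, mul_neg, mul_one, Real.exp_zero] at h
  calc Real.exp (-x) ≤ x * Real.exp (-1) + (1 - x) * 1 := by
        have : x * (-1) + (1 - x) * 0 = -x := by ring
        simpa [this] using h
    _ = 1 - (1 - Real.exp (-1)) * x := by ring

lemma exp_one_inv_lt : Real.exp (-1) < 0.37 := by
  rw [Real.exp_neg]
  have h := Real.exp_one_gt_d9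
  have hpos : (0:ℝ) < Real.exp 1 := Real.exp_pos 1
  rw [inv_lt_comm₀ hpos (by norm_num)]
  linarith

lemma le_exp_const : (13.73 : ℝ) ≤ Real.exp 2.7 := by
  have h07 : (1.945 : ℝ) ≤ Real.exp 0.7 := by
    have h := Real.sum_le_exp_of_nonneg (by norm_num : (0:ℝ) ≤ 0.7) 3
    rw [Finset.sum_range_succ, Finset.sum_range_succ, Finset.sum_range_succ,
      Finset.sum_range_zero] at h
    norm_num [Nat.factorial] at h
    linarith
  have h1 := Real.exp_one_gt_d9
  have h27 : Real.exp 2.7 = Real.exp 1 * Real.exp 1 * Real.exp 0.7 := by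
    rw [← Real.exp_add, ← Real.exp_add]
    norm_num
  rw [h27]
  nlinarith [Real.exp_pos (0.7 : ℝ), Real.exp_pos (1 : ℝ)]

lemma le_exp_17 : (5.05 : ℝ) ≤ Real.exp 1.7 := by
  have h := Real.sum_le_exp_of_nonneg (by norm_num : (0:ℝ) ≤ 1.7) 5
  rw [Finset.sum_range_succ, Finset.sum_range_succ, Finset.sum_range_succ,
    Finset.sum_range_succ, Finset.sum_range_succ, Finset.sum_range_zero] at h
  norm_num [Nat.factorial] at h
  linarith

lemma pow_div_factorial_le_exp (t : ℕ) : ((t : ℝ)) ^ t / (t.factorial : ℝ) ≤ Real.exp t := by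
  have h := Real.sum_le_exp_of_nonneg (by positivity : (0:ℝ) ≤ (t:ℝ)) (t + 1)
  refine le_trans ?_ h
  refine Finset.single_le_sum (f := fun i => ((t:ℝ)) ^ i / (i.factorial : ℝ)) ?_ ?_
  · intro i _
    positivity
  · exact Finset.self_mem_range_succ t

set_option maxHeartbeats 2000000 in
lemma tail_le {n : ℝ} {bb s d t : ℕ} {p : ℝ}
    (hp0 : 0 < p) (hp1 : p ≤ 1)
    (hn : 3 ≤ n)
    (hlog1 : 1 ≤ Real.log n)
    (hnp : 100 * Real.log n ≤ n * p)
    (hb1 : 0.99 * n ≤ (bb : ℝ)) (hb2 : (bb : ℝ) ≤ 1.01 * n)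
    (hd1 : n * p / 5 ≤ (d : ℝ)) (hd2 : (d : ℝ) ≤ n * p / 4)
    (hs : 1 ≤ s) (ht : t = d * s) (htn : (t : ℝ) ≤ n / 4) :
    ∑ j ∈ Finset.range t, (bb.choose j : ℝ) *
        ((1 - (1 - p) ^ s) ^ j * ((1 - p) ^ s) ^ (bb - j))
      ≤ (1 / n) ^ (s + 4) := by
  have hn0 : (0 : ℝ) < n := by linarith
  have hnp100 : (100 : ℝ) ≤ n * p := le_trans (by linarith) hnp
  set q0 : ℝ := (1 - p) ^ s with hq0def
  set q : ℝ := 1 - q0 with hqdef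
  have h1p0 : (0:ℝ) ≤ 1 - p := by linarith
  have hq00 : 0 ≤ q0 := pow_nonneg h1p0 s
  have hq01 : q0 ≤ 1 := pow_le_one₀ h1p0 (by linarith)
  have hq0' : 0 ≤ q := by simp only [hqdef]; linarith
  have hq1 : q ≤ 1 := by simp only [hqdef]; linarith
  have hsr : (1:ℝ) ≤ (s:ℝ) := by exact_mod_cast hs
  have htr : (t:ℝ) = (d:ℝ) * (s:ℝ) := by rw [ht]; push_cast; ring
  have hts4 : (t:ℝ) ≤ n * p * s / 4 := by
    rw [htr]
    calc (d:ℝ) * s ≤ (n * p / 4) * s := by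
          exact mul_le_mul_of_nonneg_right hd2 (by linarith)
      _ = n * p * s / 4 := by ring
  have hts5 : n * p * s / 5 ≤ (t:ℝ) := by
    rw [htr]
    calc n * p * s / 5 = (n * p / 5) * s := by ring
      _ ≤ (d:ℝ) * s := mul_le_mul_of_nonneg_right hd1 (by linarith)
  have hbt : 0.74 * n ≤ (bb:ℝ) - t := by linarith
  have htbR : (t:ℝ) ≤ (bb:ℝ) := by linarith
  have htb : t ≤ bb := by exact_mod_cast htbR
  -- q upper bounds
  have hq_le_ps : q ≤ p * s := by
    have h := one_add_mul_le_pow (by linarith : (-2:ℝ) ≤ -p) s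
    have h2 : 1 + (s:ℝ) * (-p) ≤ q0 := by
      rw [hq0def, sub_eq_add_neg]; exact h
    simp only [hqdef]
    nlinarith
  have hq0_exp : q0 ≤ Real.exp (-(p * s)) := by
    have h1 : 1 - p ≤ Real.exp (-p) := by
      have := Real.add_one_le_exp (-p)
      linarith
    calc q0 = (1 - p) ^ s := rfl
      _ ≤ (Real.exp (-p)) ^ s := pow_le_pow_left₀ h1p0 h1 s
      _ = Real.exp ((s:ℝ) * (-p)) := by rw [← Real.exp_nat_mul]
      _ = Real.exp (-(p * s)) := by ring_nf
  -- key geometric facts, by cases on p*s ≤ 1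
  have hkey : (t:ℝ) ≤ q * ((bb:ℝ) - t) ∧ (bb:ℝ) * q ≤ 5.05 * t := by
    have hinv : Real.exp (-1) < 0.37 := exp_one_inv_lt
    rcases le_or_gt (p * (s:ℝ)) 1 with hps | hps
    · have hql : 0.63 * (p * s) ≤ q := by
        have h1 : Real.exp (-(p*s)) ≤ 1 - (1 - Real.exp (-1)) * (p*s) :=
          exp_neg_le_one_sub (by positivity) hps
        have h2 : q0 ≤ 1 - (1 - Real.exp (-1)) * (p*s) := le_trans hq0_exp h1
        have h3 : (0:ℝ) ≤ p * s := by positivity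
        simp only [hqdef]
        nlinarith
      constructor
      · have h4 : 0.63 * (p*s) * (0.74 * n) ≤ q * ((bb:ℝ) - t) := by
          apply mul_le_mul hql hbt (by linarith) hq0'
        nlinarith
      · have hA : (bb:ℝ) * q ≤ (1.01 * n) * (p * s) :=
          mul_le_mul hb2 hq_le_ps hq0' (by linarith)
        nlinarith [hts5]
    · have hql : (0.63:ℝ) ≤ q := by
        have h1 : Real.exp (-(p*s)) ≤ Real.exp (-1) :=
          Real.exp_le_exp.2 (by linarith)
        simp only [hqdef]
        nlinarith [le_trans hq0_exp h1]
      constructor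
      · have h4 : 0.63 * (0.74 * n) ≤ q * ((bb:ℝ) - t) :=
          mul_le_mul hql hbt (by linarith) hq0'
        nlinarith
      · have h5 : n / 5 ≤ (t:ℝ) := by
          have h6 : n * 1 ≤ n * (p * s) :=
            mul_le_mul_of_nonneg_left (le_of_lt hps) (le_of_lt hn0)
          have h7 : n * 1 / 5 ≤ n * (p * s) / 5 := by linarith
          calc n / 5 = n * 1 / 5 := by ring
            _ ≤ n * (p * s) / 5 := h7
            _ = n * p * s / 5 := by ring
            _ ≤ (t:ℝ) := hts5
        have h8 : (bb:ℝ) * q ≤ (1.01 * n) * 1 := mul_le_mul hb2 hq1 hq0' (by linarith)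
        nlinarith
  obtain ⟨hqt, hbq⟩ := hkey
  -- monotonicity of u j = choose bb j * q^j up to t
  have step : ∀ j, j + 1 ≤ t →
      (bb.choose j : ℝ) * q ^ j ≤ (bb.choose (j+1) : ℝ) * q ^ (j+1) := by
    intro j hj
    have hjb : j ≤ bb := le_trans (by omega) htb
    have hcast : ((bb.choose j : ℝ)) * ((bb:ℝ) - j) = (bb.choose (j+1) : ℝ) * ((j:ℝ)+1) := by
      have h := Nat.choose_succ_right_eq bb j
      have : ((bb.choose (j+1) * (j+1) : ℕ) : ℝ) = ((bb.choose j * (bb - j) : ℕ) : ℝ) := by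
        exact_mod_cast congrArg (fun x : ℕ => (x:ℝ)) h
      push_cast [Nat.cast_sub hjb] at this
      linarith
    have hjt : (j:ℝ) + 1 ≤ q * ((bb:ℝ) - j) := by
      have h1 : ((j:ℝ)+1) ≤ (t:ℝ) := by exact_mod_cast hj
      have hjt2 : (j:ℝ) ≤ (t:ℝ) := by linarith
      have h2 : q * ((bb:ℝ) - t) ≤ q * ((bb:ℝ) - j) :=
        mul_le_mul_of_nonneg_left (by linarith) hq0'
      linarith
    have hCj : (0:ℝ) ≤ (bb.choose j : ℝ) := by positivity
    have hq_ineq : (bb.choose j : ℝ) ≤ (bb.choose (j+1) : ℝ) * q := by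
      have h3 : (bb.choose j : ℝ) * ((j:ℝ)+1) ≤ (bb.choose j : ℝ) * (q * ((bb:ℝ)-j)) :=
        mul_le_mul_of_nonneg_left hjt hCj
      have h4 : (bb.choose j : ℝ) * (q * ((bb:ℝ)-j))
          = ((bb.choose (j+1) : ℝ) * q) * ((j:ℝ)+1) := by
        calc (bb.choose j : ℝ) * (q * ((bb:ℝ)-j))
            = ((bb.choose j : ℝ) * ((bb:ℝ)-j)) * q := by ring
          _ = ((bb.choose (j+1) : ℝ) * ((j:ℝ)+1)) * q := by rw [hcast]
          _ = ((bb.choose (j+1) : ℝ) * q) * ((j:ℝ)+1) := by ring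
      rw [h4] at h3
      have hj1 : (0:ℝ) < (j:ℝ) + 1 := by positivity
      exact le_of_mul_le_mul_right h3 hj1
    calc (bb.choose j : ℝ) * q ^ j ≤ ((bb.choose (j+1) : ℝ) * q) * q ^ j :=
          mul_le_mul_of_nonneg_right hq_ineq (pow_nonneg hq0' j)
      _ = (bb.choose (j+1) : ℝ) * q ^ (j+1) := by ring
  have hmono : ∀ j, j ≤ t → (bb.choose j : ℝ) * q ^ j ≤ (bb.choose t : ℝ) * q ^ t := by
    have gen : ∀ m j, j + m ≤ t →
        (bb.choose j : ℝ) * q ^ j ≤ (bb.choose (j+m) : ℝ) * q ^ (j+m) := by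
      intro m
      induction m with
      | zero => intro j _; simp
      | succ m ih =>
        intro j h
        calc (bb.choose j : ℝ) * q ^ j ≤ (bb.choose (j+1) : ℝ) * q ^ (j+1) :=
              step j (by omega)
          _ ≤ (bb.choose (j+1+m) : ℝ) * q ^ (j+1+m) := ih (j+1) (by omega)
          _ = (bb.choose (j+(m+1)) : ℝ) * q ^ (j+(m+1)) := by
              rw [show j+1+m = j+(m+1) by omega]
    intro j hj
    have := gen (t - j) j (by omega)
    rwa [show j + (t-j) = t by omega] at this
  -- bound each summand
  have hterm : ∀ j ∈ Finset.range t,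
      (bb.choose j : ℝ) * (q ^ j * q0 ^ (bb - j))
        ≤ ((bb.choose t : ℝ) * q ^ t) * q0 ^ (bb - t) := by
    intro j hj
    rw [Finset.mem_range] at hj
    have h1 : q0 ^ (bb - j) ≤ q0 ^ (bb - t) :=
      pow_le_pow_of_le_one hq00 hq01 (by omega)
    calc (bb.choose j : ℝ) * (q ^ j * q0 ^ (bb - j))
        = ((bb.choose j : ℝ) * q ^ j) * q0 ^ (bb - j) := by ring
      _ ≤ ((bb.choose t : ℝ) * q ^ t) * q0 ^ (bb - t) := by
          apply mul_le_mul (hmono j (le_of_lt hj)) h1 (pow_nonneg hq00 _) ?_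
          · positivity
  have hsum : ∑ j ∈ Finset.range t, (bb.choose j : ℝ) *
        ((1 - (1 - p) ^ s) ^ j * ((1 - p) ^ s) ^ (bb - j))
      ≤ (t : ℝ) * (((bb.choose t : ℝ) * q ^ t) * q0 ^ (bb - t)) := by
    calc ∑ j ∈ Finset.range t, (bb.choose j : ℝ) *
          ((1 - (1 - p) ^ s) ^ j * ((1 - p) ^ s) ^ (bb - j))
        ≤ ∑ _j ∈ Finset.range t, ((bb.choose t : ℝ) * q ^ t) * q0 ^ (bb - t) :=
          Finset.sum_le_sum hterm
      _ = (t : ℝ) * (((bb.choose t : ℝ) * q ^ t) * q0 ^ (bb - t)) := by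
          rw [Finset.sum_const, Finset.card_range, nsmul_eq_mul]
  -- bound the main term
  have hchoose : (bb.choose t : ℝ) * q ^ t ≤ 5.05 ^ t * Real.exp t := by
    have h1 : (bb.choose t : ℝ) ≤ (bb:ℝ) ^ t / (t.factorial : ℝ) := Nat.choose_le_pow_div t bb
    have h2 : (bb.choose t : ℝ) * q ^ t ≤ ((bb:ℝ) * q) ^ t / (t.factorial : ℝ) := by
      rw [mul_pow]
      calc (bb.choose t : ℝ) * q ^ t ≤ ((bb:ℝ) ^ t / (t.factorial : ℝ)) * q ^ t :=
            mul_le_mul_of_nonneg_right h1 (pow_nonneg hq0' t)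
        _ = (bb:ℝ) ^ t * q ^ t / (t.factorial : ℝ) := by ring
    have h3 : ((bb:ℝ) * q) ^ t ≤ (5.05 * t) ^ t := by
      apply pow_le_pow_left₀ (by positivity) hbq
    have h4 : (5.05 * (t:ℝ)) ^ t / (t.factorial : ℝ) = 5.05 ^ t * ((t:ℝ) ^ t / (t.factorial : ℝ)) := by
      rw [mul_pow]; ring
    have hfac : (0:ℝ) < (t.factorial : ℝ) := by exact_mod_cast t.factorial_pos
    calc (bb.choose t : ℝ) * q ^ t ≤ ((bb:ℝ) * q) ^ t / (t.factorial : ℝ) := h2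
      _ ≤ (5.05 * (t:ℝ)) ^ t / (t.factorial : ℝ) := by
          exact (div_le_div_iff_of_pos_right hfac).2 h3
      _ = 5.05 ^ t * ((t:ℝ) ^ t / (t.factorial : ℝ)) := h4
      _ ≤ 5.05 ^ t * Real.exp t :=
          mul_le_mul_of_nonneg_left (pow_div_factorial_le_exp t) (by positivity)
  have hq0pow : q0 ^ (bb - t) ≤ Real.exp (-(p * s) * ((bb:ℝ) - t)) := by
    have h1 : q0 ^ (bb - t) ≤ (Real.exp (-(p*s))) ^ (bb - t) :=
      pow_le_pow_left₀ hq00 hq0_exp _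
    have h2 : (Real.exp (-(p*s))) ^ (bb - t) = Real.exp (((bb - t : ℕ):ℝ) * (-(p*s))) := by
      rw [← Real.exp_nat_mul]
    have h3 : ((bb - t : ℕ):ℝ) = (bb:ℝ) - t := by
      rw [Nat.cast_sub htb]
    rw [h2, h3] at h1
    calc q0 ^ (bb - t) ≤ Real.exp (((bb:ℝ) - t) * (-(p*s))) := h1
      _ = Real.exp (-(p * s) * ((bb:ℝ) - t)) := by ring_nf
  -- final exponential computation
  have hexp : 5.05 ^ t * Real.exp t * Real.exp (-(p * s) * ((bb:ℝ) - t))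
      ≤ Real.exp (-(0.065 * (n * p * s))) := by
    have h1 : (5.05:ℝ) ^ t ≤ Real.exp (1.7 * t) := by
      calc (5.05:ℝ) ^ t ≤ (Real.exp 1.7) ^ t := pow_le_pow_left₀ (by norm_num) le_exp_17 t
        _ = Real.exp ((t:ℝ) * 1.7) := by rw [← Real.exp_nat_mul]
        _ = Real.exp (1.7 * t) := by ring_nf
    have h2 : 5.05 ^ t * Real.exp t * Real.exp (-(p * s) * ((bb:ℝ) - t))
        ≤ Real.exp (1.7 * t) * Real.exp t * Real.exp (-(p * s) * ((bb:ℝ) - t)) := by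
      apply mul_le_mul_of_nonneg_right ?_ (le_of_lt (Real.exp_pos _))
      exact mul_le_mul_of_nonneg_right h1 (le_of_lt (Real.exp_pos _))
    have h3 : Real.exp (1.7 * t) * Real.exp t * Real.exp (-(p * s) * ((bb:ℝ) - t))
        = Real.exp (2.7 * t - (p * s) * ((bb:ℝ) - t)) := by
      rw [← Real.exp_add, ← Real.exp_add]
      ring_nf
    have h4 : 2.7 * (t:ℝ) - (p * s) * ((bb:ℝ) - t) ≤ -(0.065 * (n * p * s)) := by
      have h5 : (p * s) * (0.74 * n) ≤ (p * s) * ((bb:ℝ) - t) :=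
        mul_le_mul_of_nonneg_left hbt (by positivity)
      nlinarith
    calc 5.05 ^ t * Real.exp t * Real.exp (-(p * s) * ((bb:ℝ) - t))
        ≤ Real.exp (2.7 * t - (p * s) * ((bb:ℝ) - t)) := by rw [← h3]; exact h2
      _ ≤ Real.exp (-(0.065 * (n * p * s))) := Real.exp_le_exp.2 h4
  have hfin : (t:ℝ) * Real.exp (-(0.065 * (n * p * s))) ≤ (1/n) ^ (s + 4) := by
    have hX : ((s:ℝ) + 5) * Real.log n ≤ 0.065 * (n * p * s) := by
      have h1 : 100 * Real.log n * (0.065 * (s:ℝ)) ≤ (n * p) * (0.065 * s) :=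
        mul_le_mul_of_nonneg_right hnp (by positivity)
      nlinarith [hlog1, hsr]
    have h2 : Real.exp (-(0.065 * (n * p * s))) ≤ Real.exp (-(((s:ℝ)+5) * Real.log n)) :=
      Real.exp_le_exp.2 (by linarith)
    have h3 : Real.exp (-(((s:ℝ)+5) * Real.log n)) = (1/n) ^ (s+5) := by
      rw [show -(((s:ℝ)+5) * Real.log n) = ((s+5:ℕ):ℝ) * (-Real.log n) by push_cast; ring]
      rw [Real.exp_nat_mul]
      congr 1
      rw [Real.exp_neg, Real.exp_log hn0, one_div]
    have h4 : (t:ℝ) ≤ n := le_trans htn (by linarith)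
    have h5 : (0:ℝ) < 1/n := by positivity
    calc (t:ℝ) * Real.exp (-(0.065 * (n * p * s)))
        ≤ n * ((1/n) ^ (s+5)) := by
          apply mul_le_mul h4 (le_of_le_of_eq h2 h3) (le_of_lt (Real.exp_pos _)) (le_of_lt hn0)
      _ = (1/n) ^ (s + 4) := by
          rw [pow_succ]
          field_simp
  -- assemble
  calc ∑ j ∈ Finset.range t, (bb.choose j : ℝ) *
        ((1 - (1 - p) ^ s) ^ j * ((1 - p) ^ s) ^ (bb - j))
      ≤ (t : ℝ) * (((bb.choose t : ℝ) * q ^ t) * q0 ^ (bb - t)) := hsum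
    _ ≤ (t : ℝ) * ((5.05 ^ t * Real.exp t) * Real.exp (-(p * s) * ((bb:ℝ) - t))) := by
        apply mul_le_mul_of_nonneg_left ?_ (by positivity)
        apply mul_le_mul hchoose hq0pow (pow_nonneg hq00 _) (by positivity)
    _ = (t : ℝ) * (5.05 ^ t * Real.exp t * Real.exp (-(p * s) * ((bb:ℝ) - t))) := by ring
    _ ≤ (t : ℝ) * Real.exp (-(0.065 * (n * p * s))) :=
        mul_le_mul_of_nonneg_left hexp (by positivity)
    _ ≤ (1 / n) ^ (s + 4) := hfin

lemma bipProb_false : bipProb a b p (fun _ => False) = 0 := by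
  unfold bipProb
  refine Finset.sum_eq_zero fun f _ => if_neg (fun h => h)

end BipAux

section
open BipAux
set_option maxHeartbeats 2000000

/-- for fixed `k ≥ 2`, `np/log n → ∞`, `np ≤ n^{1/(k-1)}`,
`1 ≤ |A| ≤ (np)^{k-2}` and `|B| = (1+o(1))n`, for all large `n` the random bipartite graph
on `A ∪ B` with edge probability `p` contains, with probability at least `1 - 1/n³`,
an `⌊np/4⌋`-matching saturating `A`. -/
theorem bip_dMatching_sparse (k : ℕ) (hk : 2 ≤ k) (p : ℕ → ℝ)
    (hlow : Tendsto (fun n : ℕ => n * p n / Real.log n) atTop atTop)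
    (hhigh : ∀ᶠ n : ℕ in atTop, (n : ℝ) * p n ≤ (n : ℝ) ^ ((1 : ℝ) / (k - 1)))
    (a b : ℕ → ℕ)
    (ha : ∀ᶠ n : ℕ in atTop, 1 ≤ a n ∧ (a n : ℝ) ≤ ((n : ℝ) * p n) ^ (k - 2))
    (hb : Tendsto (fun n : ℕ => (b n : ℝ) / n) atTop (nhds 1)) :
    ∀ᶠ n : ℕ in atTop,
      1 - 1 / (n : ℝ) ^ 3 ≤
        bipProb (a n) (b n) (p n) (fun E => HasDMatching E ⌊(n : ℝ) * p n / 4⌋₊) := by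
  have E1 : ∀ᶠ n : ℕ in atTop, 100 ≤ (n : ℝ) * p n / Real.log n :=
    hlow.eventually_ge_atTop 100
  have E4 : ∀ᶠ n : ℕ in atTop, |((b n : ℝ) / n) - 1| < 0.01 := by
    have h := Metric.tendsto_nhds.mp hb 0.01 (by norm_num)
    filter_upwards [h] with n hn
    rwa [Real.dist_eq] at hn
  have E5 : ∀ᶠ n : ℕ in atTop, 3 ≤ n := eventually_ge_atTop 3
  filter_upwards [E1, hhigh, ha, E4, E5] with n h1 h2 h3 h4 h5
  set N : ℝ := (n : ℝ) with hN
  set pp : ℝ := p n with hpp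
  set A : ℕ := a n with hA
  set B : ℕ := b n with hB
  set d : ℕ := ⌊N * pp / 4⌋₊ with hd
  have hn3 : (3 : ℝ) ≤ N := by rw [hN]; exact_mod_cast h5
  have hn0 : (0 : ℝ) < N := by linarith
  have hlog1 : 1 ≤ Real.log N := by
    rw [Real.le_log_iff_exp_le hn0]
    calc Real.exp 1 ≤ 2.7182818286 := le_of_lt Real.exp_one_lt_d9
      _ ≤ N := by linarith
  have hlogpos : (0:ℝ) < Real.log N := by linarith
  have hnp : 100 * Real.log N ≤ N * pp := by
    have := (le_div_iff₀ hlogpos).1 h1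
    linarith
  have hnp100 : (100 : ℝ) ≤ N * pp := by nlinarith
  have hp0 : 0 < pp := by nlinarith
  have hkR : (2 : ℝ) ≤ (k : ℝ) := by exact_mod_cast hk
  have hp1 : pp ≤ 1 := by
    have hk1 : (1:ℝ) / ((k:ℝ) - 1) ≤ 1 := by
      rw [div_le_one (by linarith)]
      linarith
    have h6 : N ^ ((1:ℝ)/((k:ℝ)-1)) ≤ N ^ (1:ℝ) :=
      Real.rpow_le_rpow_of_exponent_le (by linarith) hk1
    rw [Real.rpow_one] at h6
    nlinarith [le_trans h2 h6]
  have hpk : (N * pp) ^ (k - 1) ≤ N := by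
    have hkk : ((k:ℝ) - 1) = ((k - 1 : ℕ) : ℝ) := by
      rw [Nat.cast_sub (by omega : 1 ≤ k)]
      norm_num
    calc (N * pp) ^ (k - 1) ≤ (N ^ ((1:ℝ)/((k:ℝ)-1))) ^ (k - 1) :=
          pow_le_pow_left₀ (by positivity) h2 _
      _ = N ^ (((1:ℝ)/((k:ℝ)-1)) * ((k - 1 : ℕ) : ℝ)) := by
          rw [← Real.rpow_natCast (N ^ ((1:ℝ)/((k:ℝ)-1))) (k-1), ← Real.rpow_mul (le_of_lt hn0)]
      _ = N ^ (1:ℝ) := by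
          congr 1
          rw [← hkk]
          have hkn0 : ((k:ℝ) - 1) ≠ 0 := by
            have : (0:ℝ) < (k:ℝ) - 1 := by linarith
            exact ne_of_gt this
          field_simp
      _ = N := Real.rpow_one N
  have hb' := abs_lt.1 h4
  have hb1 : 0.99 * N ≤ (B : ℝ) := by
    have h7 : (0.99 : ℝ) ≤ (B:ℝ)/N := by linarith [hb'.1]
    rw [le_div_iff₀ hn0] at h7
    linarith
  have hb2 : (B : ℝ) ≤ 1.01 * N := by
    have h7 : (B:ℝ)/N ≤ 1.01 := by linarith [hb'.2]
    rw [div_le_iff₀ hn0] at h7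
    linarith
  have hd2 : (d : ℝ) ≤ N * pp / 4 := Nat.floor_le (by positivity)
  have hd1 : N * pp / 5 ≤ (d : ℝ) := by
    have := Nat.sub_one_lt_floor (N * pp / 4)
    have h8 : N * pp / 5 ≤ N * pp / 4 - 1 := by nlinarith
    linarith
  have ha1 : 1 ≤ A := h3.1
  have haR : (A : ℝ) ≤ (N * pp) ^ (k - 2) := h3.2
  have hpow : ((N * pp) : ℝ) ^ (k - 2) * (N * pp) = (N * pp) ^ (k - 1) := by
    rw [← pow_succ]
    congr 1
    omega
  have han : (A : ℝ) * (N * pp) ≤ N := by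
    calc (A : ℝ) * (N * pp) ≤ (N * pp) ^ (k - 2) * (N * pp) :=
          mul_le_mul_of_nonneg_right haR (by positivity)
      _ = (N * pp) ^ (k - 1) := hpow
      _ ≤ N := hpk
  have hA0 : (0:ℝ) ≤ (A:ℝ) := by positivity
  have ha100 : (A : ℝ) ≤ N / 100 := by nlinarith
  -- per-subset bad event bound
  have hbadS : ∀ S : Finset (Fin A),
      bipProb A B pp (fun E => (Nb S E).card < d * S.card)
        ≤ (if S.card = 0 then 0 else (1/N) ^ (S.card + 4)) := by
    intro S
    by_cases hS : S.card = 0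
    · rw [if_pos hS]
      have h0 : bipProb A B pp (fun E => (Nb S E).card < d * S.card)
          = bipProb A B pp (fun _ => False) := bipProb_congr (fun E => by simp [hS])
      rw [h0, bipProb_false]
    · rw [if_neg hS]
      have hs1 : 1 ≤ S.card := by omega
      have hsA : S.card ≤ A := by
        calc S.card ≤ (Finset.univ : Finset (Fin A)).card :=
              Finset.card_le_card (Finset.subset_univ S)
          _ = A := by rw [Finset.card_univ, Fintype.card_fin]
      have hsAR : ((S.card : ℝ)) ≤ (A : ℝ) := by exact_mod_cast hsA
      have htn : ((d * S.card : ℕ) : ℝ) ≤ N / 4 := by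
        push_cast
        have hc1 : (d:ℝ) * S.card ≤ (N * pp / 4) * A := by
          apply mul_le_mul hd2 hsAR (by positivity) (by positivity)
        nlinarith
      have htb : d * S.card ≤ B := by
        have : ((d * S.card : ℕ) : ℝ) ≤ (B : ℝ) := by
          calc ((d * S.card : ℕ) : ℝ) ≤ N / 4 := htn
            _ ≤ 0.99 * N := by linarith
            _ ≤ (B : ℝ) := hb1
        exact_mod_cast this
      rw [bipProb_card_lt S (d * S.card) htb]
      exact tail_le hp0 hp1 hn3 hlog1 hnp hb1 hb2 hd1 hd2 hs1 rfl htn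
  -- union bound
  have hunion : bipProb A B pp
      (fun E => ∃ S ∈ (Finset.univ : Finset (Fin A)).powerset, (Nb S E).card < d * S.card)
        ≤ 2 * (1/N) ^ 4 := by
    refine le_trans (bipProb_union (le_of_lt hp0) hp1 _ _) ?_
    calc ∑ S ∈ (Finset.univ : Finset (Fin A)).powerset,
            bipProb A B pp (fun E => (Nb S E).card < d * S.card)
        ≤ ∑ S ∈ (Finset.univ : Finset (Fin A)).powerset,
            (fun m => if m = 0 then (0:ℝ) else (1/N) ^ (m + 4)) S.card :=
          Finset.sum_le_sum fun S _ => hbadS S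
      _ = ∑ j ∈ Finset.range ((Finset.univ : Finset (Fin A)).card + 1),
            ((Finset.univ : Finset (Fin A)).card.choose j) •
              (fun m => if m = 0 then (0:ℝ) else (1/N) ^ (m + 4)) j :=
          Finset.sum_powerset_apply_card (fun m => if m = 0 then (0:ℝ) else (1/N) ^ (m + 4))
      _ ≤ ∑ j ∈ Finset.range ((Finset.univ : Finset (Fin A)).card + 1),
            (1/N) ^ 4 * (1/2) ^ j := by
          refine Finset.sum_le_sum fun j _ => ?_
          by_cases hj : j = 0
          · simp only [hj]
            norm_num
            positivity
          · simp only [if_neg hj]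
            rw [nsmul_eq_mul]
            have hc1 : (((Finset.univ : Finset (Fin A)).card.choose j : ℕ) : ℝ)
                ≤ ((A : ℝ)) ^ j := by
              have := Nat.choose_le_pow (Finset.univ : Finset (Fin A)).card j
              calc (((Finset.univ : Finset (Fin A)).card.choose j : ℕ) : ℝ)
                  ≤ (((Finset.univ : Finset (Fin A)).card ^ j : ℕ) : ℝ) := by exact_mod_cast this
                _ = ((A:ℝ)) ^ j := by
                    rw [Finset.card_univ, Fintype.card_fin]
                    push_cast
                    ring
            have hsplit : (1/N : ℝ) ^ (j + 4) = (1/N) ^ j * (1/N) ^ 4 := by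
              rw [pow_add]
            calc (((Finset.univ : Finset (Fin A)).card.choose j : ℕ) : ℝ) * (1/N) ^ (j + 4)
                ≤ ((A:ℝ)) ^ j * ((1/N) ^ j * (1/N) ^ 4) := by
                  rw [← hsplit]
                  apply mul_le_mul_of_nonneg_right hc1 (by positivity)
              _ = ((A:ℝ) * (1/N)) ^ j * (1/N) ^ 4 := by rw [mul_pow]; ring
              _ ≤ (1/2 : ℝ) ^ j * (1/N) ^ 4 := by
                  apply mul_le_mul_of_nonneg_right ?_ (by positivity)
                  apply pow_le_pow_left₀ (by positivity)
                  rw [mul_one_div, div_le_iff₀ hn0]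
                  nlinarith
              _ = (1/N) ^ 4 * (1/2) ^ j := by ring
      _ = (1/N) ^ 4 * ∑ j ∈ Finset.range ((Finset.univ : Finset (Fin A)).card + 1),
            ((1:ℝ)/2) ^ j := by rw [Finset.mul_sum]
      _ ≤ (1/N) ^ 4 * 2 := by
          apply mul_le_mul_of_nonneg_left (sum_geometric_two_le _) (by positivity)
      _ = 2 * (1/N) ^ 4 := by ring
  -- complement and Hall
  have hgood : 1 - 2 * (1/N) ^ 4 ≤ bipProb A B pp
      (fun E => ∀ S : Finset (Fin A), d * S.card ≤ (Nb S E).card) := by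
    have hcongr : bipProb A B pp
        (fun E => ∀ S : Finset (Fin A), d * S.card ≤ (Nb S E).card)
        = bipProb A B pp (fun E => ¬ (∃ S ∈ (Finset.univ : Finset (Fin A)).powerset,
            (Nb S E).card < d * S.card)) := by
      refine bipProb_congr fun E => ?_
      constructor
      · rintro h ⟨S, -, hlt⟩
        exact absurd (h S) (not_le.2 hlt)
      · intro h S
        by_contra hlt
        exact h ⟨S, Finset.mem_powerset.2 (Finset.subset_univ S), not_le.1 hlt⟩
    rw [hcongr, bipProb_compl]
    linarith
  have hmatch : bipProb A B pp
      (fun E => ∀ S : Finset (Fin A), d * S.card ≤ (Nb S E).card)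
        ≤ bipProb A B pp (fun E => HasDMatching E d) :=
    bipProb_mono (le_of_lt hp0) hp1 (fun E h => hall_dMatching E h)
  have hfinal : 2 * (1/N) ^ 4 ≤ 1 / N ^ 3 := by
    have h9 : 2 * ((1:ℝ)/N) ^ 4 = 2 / N ^ 4 := by
      rw [div_pow, one_pow]
      ring
    rw [h9, div_le_div_iff₀ (pow_pos hn0 4) (pow_pos hn0 3)]
    calc 2 * N ^ 3 ≤ N * N ^ 3 := by nlinarith [pow_pos hn0 3]
      _ = N ^ 4 := by ring
      _ = 1 * N ^ 4 := by ring
  calc 1 - 1 / N ^ 3 ≤ 1 - 2 * (1/N) ^ 4 := by linarith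
    _ ≤ bipProb A B pp (fun E => ∀ S : Finset (Fin A), d * S.card ≤ (Nb S E).card) := hgood
    _ ≤ bipProb A B pp (fun E => HasDMatching E d) := hmatch

end
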